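/- With the diagonal torus action on ℂ^N given by nonzero weights w₁,…,w_N ∈ Λ* and moment map μ(v) = π Σ_ν |v_ν|² w_ν, an element τ ∈ t* is a regular value of μ if and only if for every index set J ⊆ {1,…,N} and positive coefficients a_j > 0 with τ = Σ_{j∈J} a_j w_j, the family (w_j)_{j∈J} spans t*. -/

import Mathlib

open scoped RealInnerProductSpace

/-- For the diagonal torus action on `ℂ^N` with nonzero weights
`w ν ∈ Λ*` and moment map `μ(v) = π ∑ ν ‖v ν‖² • w ν`, an element `τ ∈ t*` is a
regular value of `μ` (i.e. the differential `dμ_v(x) = 2π ∑ ν Re(x ν ⬝ conj (v ν)) • w ν`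
is surjective at every `v ∈ μ⁻¹(τ)`) if and only if for every index set `J` and positive
coefficients `a j > 0` with `τ = ∑_{j ∈ J} a j • w j`, the family `(w j)_{j ∈ J}`
spans `t*`. -/
theorem moment_map_regular_value_iff
    (k N : ℕ) (w : Fin N → EuclideanSpace ℝ (Fin k)) (hw : ∀ ν, w ν ≠ 0)
    (τ : EuclideanSpace ℝ (Fin k)) :
    (∀ v : EuclideanSpace ℂ (Fin N),
        Real.pi • ∑ ν, (‖v ν‖ ^ 2) • w ν = τ →
        Function.Surjective fun x : EuclideanSpace ℂ (Fin N) =>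
          (2 * Real.pi) • ∑ ν, (x ν * (starRingEnd ℂ) (v ν)).re • w ν) ↔
      ∀ (J : Finset (Fin N)) (a : Fin N → ℝ),
        (∀ j ∈ J, 0 < a j) → τ = ∑ j ∈ J, a j • w j →
        Submodule.span ℝ (w '' ↑J) = ⊤ := by
  constructor
  · intro h J a ha hτ
    set v : EuclideanSpace ℂ (Fin N) :=
      WithLp.toLp 2 fun ν => if ν ∈ J then ((Real.sqrt (a ν / Real.pi) : ℝ) : ℂ) else 0 with hv
    have hvν : ∀ ν ∈ J, ‖v ν‖ ^ 2 = a ν / Real.pi := by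
      intro ν hν
      simp only [hv, if_pos hν, Complex.norm_real, Real.norm_eq_abs, sq_abs]
      exact Real.sq_sqrt (div_nonneg (ha ν hν).le Real.pi_pos.le)
    have h0 : ∀ ν ∈ Finset.univ, ν ∉ J → Real.pi • ((‖v ν‖ ^ 2) • w ν) = 0 := by
      intro ν _ hν
      simp [hv, if_neg hν]
    have hmom : Real.pi • ∑ ν, (‖v ν‖ ^ 2) • w ν = τ := by
      rw [hτ, Finset.smul_sum, ← Finset.sum_subset (Finset.subset_univ J) h0]
      refine Finset.sum_congr rfl fun ν hν => ?_
      rw [hvν ν hν, smul_smul]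
      congr 1
      field_simp
    have surj := h v hmom
    rw [eq_top_iff]
    rintro y -
    obtain ⟨x, hx⟩ := surj y
    rw [← hx]
    refine Submodule.smul_mem _ _ (Submodule.sum_mem _ fun ν _ => ?_)
    by_cases hν : ν ∈ J
    · exact Submodule.smul_mem _ _ (Submodule.subset_span ⟨ν, hν, rfl⟩)
    · simp [hv, if_neg hν]
  · intro h v hmom y
    set J : Finset (Fin N) := Finset.univ.filter (fun ν => v ν ≠ 0) with hJ
    have hmemJ : ∀ ν, ν ∈ J ↔ v ν ≠ 0 := by
      intro ν; simp [hJ]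
    have hspan : Submodule.span ℝ (w '' ↑J) = ⊤ := by
      refine h J (fun ν => Real.pi * ‖v ν‖ ^ 2) ?_ ?_
      · intro j hj
        have hj' : v j ≠ 0 := (hmemJ j).mp hj
        have : 0 < ‖v j‖ := norm_pos_iff.mpr hj'
        positivity
      · have h0 : ∀ ν ∈ Finset.univ, ν ∉ J → Real.pi • ((‖v ν‖ ^ 2) • w ν) = 0 := by
          intro ν _ hν
          have hv0 : v ν = 0 := of_not_not ((hmemJ ν).not.mp hν)
          simp [hv0]
        rw [← hmom, Finset.smul_sum, ← Finset.sum_subset (Finset.subset_univ J) h0]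
        exact Finset.sum_congr rfl fun ν _ => smul_smul _ _ _
    have hy : y ∈ Submodule.span ℝ (w '' ↑J) := hspan ▸ Submodule.mem_top
    rw [Set.image_eq_range, Submodule.mem_span_range_iff_exists_fun ℝ] at hy
    obtain ⟨c, hc⟩ := hy
    set b : Fin N → ℝ := fun ν => if hν : ν ∈ J then c ⟨ν, hν⟩ else 0 with hb
    have hb' : ∀ i : (↑J : Set (Fin N)), c i = b ↑i := by
      rintro ⟨i, hi⟩
      simp only [hb]
      rw [dif_pos (Finset.mem_coe.mp hi)]
    have hby : ∑ ν ∈ J, b ν • w ν = y := by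
      rw [← hc]
      rw [show (∑ i : (↑J : Set (Fin N)), c i • w ↑i)
            = ∑ i : (↑J : Set (Fin N)), b ↑i • w ↑i from
          Finset.sum_congr rfl fun i _ => by rw [hb']]
      exact (Finset.sum_finset_coe (fun i => b i • w i) J).symm
    set x : EuclideanSpace ℂ (Fin N) :=
      WithLp.toLp 2 fun ν => if ν ∈ J then ((b ν / (2 * Real.pi * ‖v ν‖ ^ 2) : ℝ) : ℂ) * v ν else 0
      with hxdef
    refine ⟨x, ?_⟩
    have h0 : ∀ ν ∈ Finset.univ, ν ∉ J → ((x ν * (starRingEnd ℂ) (v ν)).re) • w ν = 0 := by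
      intro ν _ hν
      have hv0 : v ν = 0 := of_not_not ((hmemJ ν).not.mp hν)
      simp [hv0]
    simp only
    rw [← Finset.sum_subset (Finset.subset_univ J) h0, Finset.smul_sum, ← hby]
    refine Finset.sum_congr rfl fun ν hν => ?_
    have hvν : v ν ≠ 0 := (hmemJ ν).mp hν
    have hnorm : ‖v ν‖ ^ 2 ≠ 0 := pow_ne_zero _ (norm_ne_zero_iff.mpr hvν)
    have h2π : (2 * Real.pi) ≠ 0 := by positivity
    have key : (x ν * (starRingEnd ℂ) (v ν)).re = b ν / (2 * Real.pi) := by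
      simp only [hxdef, if_pos hν, mul_assoc, Complex.mul_conj]
      rw [← Complex.ofReal_mul, Complex.ofReal_re, Complex.normSq_eq_norm_sq]
      have habs : ‖v ν‖ ≠ 0 := by
        simpa using norm_ne_zero_iff.mpr hvν
      field_simp
    rw [smul_smul, key, mul_comm, div_mul_cancel₀ _ h2π]
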